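/- Let p, q, r, s be prime natural numbers with p ≠ q and r ≠ s, and suppose the unordered pairs {p, q} and {r, s} are not equal. Set t₁ = 2π/|√p − √q| and t₂ = 2π/|√r − √s| (the periods of the functions x ↦ cos((√p − √q)x) and x ↦ cos((√r − √s)x)). Then there exist no nonzero integers n₁, n₂ with n₁·t₁ = n₂·t₂. -/

import Mathlib

lemma aux_ne (a b t u r s : ℕ) (ha : a ≠ 0) (hb : b ≠ 0)
    (ht : Nat.Prime t) (hu : Nat.Prime u) (hr : Nat.Prime r) (hs : Nat.Prime s)
    (htu : t ≠ u) (htr : t ≠ r) (hts : t ≠ s) :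
    a ^ 4 * (t * u) ≠ b ^ 4 * (r * s) := by
  haveI : Fact t.Prime := ⟨ht⟩
  intro h
  have h1 : padicValNat t (a ^ 4 * (t * u)) = 4 * padicValNat t a + 1 := by
    rw [padicValNat.mul (pow_ne_zero _ ha) (Nat.mul_ne_zero ht.pos.ne' hu.pos.ne'), padicValNat.mul ht.pos.ne'
      hu.pos.ne', padicValNat.pow _ _, padicValNat.self ht.one_lt,
      padicValNat.eq_zero_of_not_dvd (fun hd => htu ((Nat.prime_dvd_prime_iff_eq ht hu).mp hd))]
  have h2 : padicValNat t (b ^ 4 * (r * s)) = 4 * padicValNat t b := by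
    rw [padicValNat.mul (pow_ne_zero _ hb) (Nat.mul_ne_zero hr.pos.ne' hs.pos.ne'), padicValNat.mul hr.pos.ne'
      hs.pos.ne', padicValNat.pow _ _,
      padicValNat.eq_zero_of_not_dvd (fun hd => htr ((Nat.prime_dvd_prime_iff_eq ht hr).mp hd)),
      padicValNat.eq_zero_of_not_dvd (fun hd => hts ((Nat.prime_dvd_prime_iff_eq ht hs).mp hd))]
    omega
  rw [h] at h1
  omega

lemma aux_irr (r s : ℕ) (hr : Nat.Prime r) (hs : Nat.Prime s) (hrs : r ≠ s) :
    Irrational (Real.sqrt ((r * s : ℕ) : ℝ)) := by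
  rw [irrational_sqrt_natCast_iff]
  rintro ⟨k, hk⟩
  have h1 : r ∣ k := hr.dvd_of_dvd_pow (n := 2) (by rw [sq]; exact ⟨s, hk.symm⟩)
  obtain ⟨m, rfl⟩ := h1
  have : s = r * m * m := by
    have := hk
    have hr0 := hr.pos
    nlinarith [hk]
  exact hrs ((Nat.prime_dvd_prime_iff_eq hr hs).mp ⟨m * m, by linarith⟩)

theorem periods_incommensurable
    (p q r s : ℕ) (hp : Nat.Prime p) (hq : Nat.Prime q) (hr : Nat.Prime r) (hs : Nat.Prime s)
    (hpq : p ≠ q) (hrs : r ≠ s)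
    (hne : ({p, q} : Finset ℕ) ≠ ({r, s} : Finset ℕ))
    (t₁ t₂ : ℝ)
    (ht₁ : t₁ = 2 * Real.pi / |Real.sqrt p - Real.sqrt q|)
    (ht₂ : t₂ = 2 * Real.pi / |Real.sqrt r - Real.sqrt s|) :
    ¬ ∃ n₁ n₂ : ℤ, n₁ ≠ 0 ∧ n₂ ≠ 0 ∧ (n₁ : ℝ) * t₁ = (n₂ : ℝ) * t₂ := by
  rintro ⟨n₁, n₂, hn₁, hn₂, h⟩
  have hp0 : (0:ℝ) ≤ (p:ℝ) := Nat.cast_nonneg p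
  have hq0 : (0:ℝ) ≤ (q:ℝ) := Nat.cast_nonneg q
  have hr0 : (0:ℝ) ≤ (r:ℝ) := Nat.cast_nonneg r
  have hs0 : (0:ℝ) ≤ (s:ℝ) := Nat.cast_nonneg s
  have hd1 : Real.sqrt p - Real.sqrt q ≠ 0 := by
    rw [sub_ne_zero]
    intro hc
    exact hpq (Nat.cast_injective ((Real.sqrt_inj hp0 hq0).mp hc))
  have hd2 : Real.sqrt r - Real.sqrt s ≠ 0 := by
    rw [sub_ne_zero]
    intro hc
    exact hrs (Nat.cast_injective ((Real.sqrt_inj hr0 hs0).mp hc))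
  have ha1 : |Real.sqrt p - Real.sqrt q| ≠ 0 := abs_ne_zero.mpr hd1
  have ha2 : |Real.sqrt r - Real.sqrt s| ≠ 0 := abs_ne_zero.mpr hd2
  rw [ht₁, ht₂] at h
  -- cancel 2π
  have key : (n₁:ℝ) * |Real.sqrt r - Real.sqrt s| = (n₂:ℝ) * |Real.sqrt p - Real.sqrt q| := by
    field_simp at h
    have hpi : (2 * Real.pi) ≠ 0 := by positivity
    apply mul_right_cancel₀ hpi
    linear_combination (2 * Real.pi) * h
  -- square both sides
  have hsq : (n₁:ℝ)^2 * ((r:ℝ) + s - 2 * Real.sqrt ((r*s : ℕ) : ℝ))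
      = (n₂:ℝ)^2 * ((p:ℝ) + q - 2 * Real.sqrt ((p*q : ℕ) : ℝ)) := by
    have e1 : ((p:ℝ) + q - 2 * Real.sqrt ((p*q : ℕ) : ℝ)) = (Real.sqrt p - Real.sqrt q)^2 := by
      rw [sub_sq, Nat.cast_mul, Real.sqrt_mul hp0, Real.sq_sqrt hp0, Real.sq_sqrt hq0]
      ring
    have e2 : ((r:ℝ) + s - 2 * Real.sqrt ((r*s : ℕ) : ℝ)) = (Real.sqrt r - Real.sqrt s)^2 := by
      rw [sub_sq, Nat.cast_mul, Real.sqrt_mul hr0, Real.sq_sqrt hr0, Real.sq_sqrt hs0]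
      ring
    have := congrArg (·^2) key
    simp only [mul_pow, sq_abs] at this
    rw [e1, e2]
    exact this
  set X := Real.sqrt ((p*q : ℕ) : ℝ) with hX
  set Y := Real.sqrt ((r*s : ℕ) : ℝ) with hY
  have hX2 : X^2 = ((p*q : ℕ) : ℝ) := Real.sq_sqrt (Nat.cast_nonneg _)
  have hY2 : Y^2 = ((r*s : ℕ) : ℝ) := Real.sq_sqrt (Nat.cast_nonneg _)
  set C : ℤ := n₂^2*(p+q) - n₁^2*(r+s) with hC
  have hCeq : (C:ℝ) = 2 * n₂^2 * X - 2 * n₁^2 * Y := by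
    push_cast [hC]
    linear_combination -hsq
  have hX2' : X^2 = (p:ℝ) * (q:ℝ) := by rw [hX2]; push_cast; ring
  have hY2' : Y^2 = (r:ℝ) * (s:ℝ) := by rw [hY2]; push_cast; ring
  have hC0 : C = 0 := by
    by_contra hC0
    have hk : (4*C*n₁^2 : ℤ) ≠ 0 := by
      simp only [mul_ne_zero_iff]
      exact ⟨⟨by norm_num, hC0⟩, pow_ne_zero _ hn₁⟩
    have hirr : Irrational Y := aux_irr r s hr hs hrs
    have : ((4*C*n₁^2 : ℤ) : ℝ) * Y = ((4*(n₂^2)^2*(p*q) - C^2 - 4*(n₁^2)^2*(r*s) : ℤ) : ℝ) := by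
      have hlin : (C:ℝ) + 2*(n₁:ℝ)^2*Y = 2*(n₂:ℝ)^2*X := by linarith [hCeq]
      have hsq2 := congrArg (·^2) hlin
      push_cast
      linear_combination hsq2 + 4*(n₂:ℝ)^4*hX2' - 4*(n₁:ℝ)^4*hY2'
    exact (Irrational.intCast_mul hirr hk).ne_int _ this
  have hXY : 2 * (n₂:ℝ)^2 * X = 2 * (n₁:ℝ)^2 * Y := by
    rw [hC0] at hCeq
    push_cast at hCeq
    linarith
  have hnat : (n₂.natAbs)^4 * (p*q) = (n₁.natAbs)^4 * (r*s) := by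
    have habs1 : ((n₁.natAbs : ℕ):ℝ)^2 = (n₁:ℝ)^2 := by
      rw [Nat.cast_natAbs]
      push_cast
      exact sq_abs _
    have habs2 : ((n₂.natAbs : ℕ):ℝ)^2 = (n₂:ℝ)^2 := by
      rw [Nat.cast_natAbs]
      push_cast
      exact sq_abs _
    have hreal : ((n₂.natAbs^4 * (p*q) : ℕ) : ℝ) = ((n₁.natAbs^4 * (r*s) : ℕ) : ℝ) := by
      push_cast
      have h4 := congrArg (·^2) hXY
      linear_combination (1/4)*h4 - (n₂:ℝ)^4*hX2' + (n₁:ℝ)^4*hY2' + (((n₂.natAbs:ℕ):ℝ)^2 + (n₂:ℝ)^2)*((p:ℝ)*(q:ℝ))*habs2 - (((n₁.natAbs:ℕ):ℝ)^2 + (n₁:ℝ)^2)*((r:ℝ)*(s:ℝ))*habs1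
    exact_mod_cast hreal
  have hn1' : n₁.natAbs ≠ 0 := Int.natAbs_ne_zero.mpr hn₁
  have hn2' : n₂.natAbs ≠ 0 := Int.natAbs_ne_zero.mpr hn₂
  have hne' : ∃ t, ¬(t ∈ ({p,q}:Finset ℕ) ↔ t ∈ ({r,s}:Finset ℕ)) := by
    by_contra hco
    push_neg at hco
    exact hne (Finset.ext fun a => hco a)
  obtain ⟨t, ht⟩ := hne'
  simp only [Finset.mem_insert, Finset.mem_singleton] at ht
  by_cases h1 : t = p ∨ t = q
  · have h2 : t ≠ r ∧ t ≠ s := by tauto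
    rcases h1 with rfl | rfl
    · exact aux_ne _ _ t q r s hn2' hn1' hp hq hr hs hpq h2.1 h2.2 hnat
    · rw [mul_comm p t] at hnat
      exact aux_ne _ _ t p r s hn2' hn1' hq hp hr hs (Ne.symm hpq) h2.1 h2.2 hnat
  · have h2 : t = r ∨ t = s := by tauto
    push_neg at h1
    rcases h2 with rfl | rfl
    · exact aux_ne _ _ t s p q hn1' hn2' hr hs hp hq hrs h1.1 h1.2 hnat.symm
    · rw [mul_comm r t] at hnat
      exact aux_ne _ _ t r p q hn1' hn2' hs hr hp hq (Ne.symm hrs) h1.1 h1.2 hnat.symm
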